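/- arXiv:2005.01271 — 3 statements merged into one kernel-verified Lean document; each statement's English description precedes it below -/
import Mathlib

section
/- Let k ≥ 2 be an integer. If τ is a symmetric polynomial matrix whose entries have total degree at most k and div div τ = 0, then there exists a polynomial vector field v = (v₁, v₂) whose components have total degree at most k+1 such that τ = sym curl v. -/
open MvPolynomial Matrix

/-- Real polynomials in two variables. -/
abbrev P2 := MvPolynomial (Fin 2) ℝ

/-- The matrix `curl v` of a polynomial vector field, defined row-wise:
`(curl v)_{i1} = ∂₂ vᵢ`, `(curl v)_{i2} = -∂₁ vᵢ`. -/
noncomputable def pcurl (v : Fin 2 → P2) : Matrix (Fin 2) (Fin 2) P2 :=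
  Matrix.of fun i j =>
    if j = 0 then pderiv (1 : Fin 2) (v i) else -(pderiv (0 : Fin 2) (v i))

/-- `sym curl v := (curl v + (curl v)ᵀ)/2`. -/
noncomputable def psymCurl (v : Fin 2 → P2) : Matrix (Fin 2) (Fin 2) P2 :=
  (1 / 2 : ℝ) • (pcurl v + (pcurl v)ᵀ)

/-- `div div τ := Σ_{i,j} ∂ᵢ∂ⱼ τ_{ij}`. -/
noncomputable def pdivDiv (τ : Matrix (Fin 2) (Fin 2) P2) : P2 :=
  ∑ i : Fin 2, ∑ j : Fin 2, pderiv i (pderiv j (τ i j))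

/-- The matrix `x xᵀ q` with `(i,j)`-entry `Xᵢ · Xⱼ · q`. -/
noncomputable def xxT (q : P2) : Matrix (Fin 2) (Fin 2) P2 :=
  Matrix.of fun i j => X i * X j * q

/-- The polynomial vector `x^⊥ = (X₂, -X₁)`. -/
noncomputable def xPerp : Fin 2 → P2 := ![X 1, -X 0]

/-- `rot τ`, with components `(rot τ)ᵢ = ∂₁ τ_{i2} - ∂₂ τ_{i1}`. -/
noncomputable def prot (τ : Matrix (Fin 2) (Fin 2) P2) : Fin 2 → P2 :=
  fun i => pderiv (0 : Fin 2) (τ i 1) - pderiv (1 : Fin 2) (τ i 0)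

/-- The Hessian matrix `∇²q` with entries `∂ᵢ∂ⱼ q`. -/
noncomputable def phess (q : P2) : Matrix (Fin 2) (Fin 2) P2 :=
  Matrix.of fun i j => pderiv i (pderiv j q)

/-- `sym(x^⊥ ⊗ v)`, the symmetric matrix with `(i,j)`-entry
`((x^⊥)ᵢ vⱼ + vᵢ (x^⊥)ⱼ)/2`. -/
noncomputable def symTen (v : Fin 2 → P2) : Matrix (Fin 2) (Fin 2) P2 :=
  Matrix.of fun i j => (1 / 2 : ℝ) • (xPerp i * v j + v i * xPerp j)

/-- The gradient matrix `∇v` with entries `(∇v)_{ij} = ∂ⱼ vᵢ`. -/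
noncomputable def pgrad (v : Fin 2 → P2) : Matrix (Fin 2) (Fin 2) P2 :=
  Matrix.of fun i j => pderiv j (v i)

/-- The symmetric gradient `def v := (∇v + (∇v)ᵀ)/2`. -/
noncomputable def pdef (v : Fin 2 → P2) : Matrix (Fin 2) (Fin 2) P2 :=
  (1 / 2 : ℝ) • (pgrad v + (pgrad v)ᵀ)

/-- The matrix `x^⊥ (x^⊥)ᵀ q` with `(i,j)`-entry `(x^⊥)ᵢ (x^⊥)ⱼ q`. -/
noncomputable def xPerpxPerpT (q : P2) : Matrix (Fin 2) (Fin 2) P2 :=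
  Matrix.of fun i j => xPerp i * xPerp j * q

/-- `rot rot τ := ∂₁(rot τ)₂ − ∂₂(rot τ)₁`. -/
noncomputable def protRot (τ : Matrix (Fin 2) (Fin 2) P2) : P2 :=
  pderiv (0 : Fin 2) (prot τ 1) - pderiv (1 : Fin 2) (prot τ 0)

noncomputable def anti (i : Fin 2) (p : P2) : P2 :=
  ∑ m ∈ p.support, monomial (m + Finsupp.single i 1) (p.coeff m / (m i + 1))

lemma pderiv_anti (i : Fin 2) (p : P2) : pderiv i (anti i p) = p := by
  rw [anti, map_sum]
  conv_rhs => rw [p.as_sum]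
  refine Finset.sum_congr rfl fun m hm => ?_
  rw [pderiv_monomial]
  have hind : m + Finsupp.single i 1 - Finsupp.single i 1 = m := add_tsub_cancel_right _ _
  have hap : ((m + Finsupp.single i 1) : Fin 2 →₀ ℕ) i = m i + 1 := by simp
  rw [hind, hap]
  have hc : p.coeff m / ((m i : ℝ) + 1) * ((m i + 1 : ℕ) : ℝ) = p.coeff m := by
    push_cast
    rw [div_mul_cancel₀]
    positivity
  rw [hc]

lemma totalDegree_anti (i : Fin 2) (p : P2) :
    (anti i p).totalDegree ≤ p.totalDegree + 1 := by
  refine (totalDegree_finset_sum _ _).trans (Finset.sup_le fun m hm => ?_)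
  refine (totalDegree_monomial_le _ _).trans ?_
  have h1 : (m + Finsupp.single i 1).sum (fun _ e => e) = (m.sum fun _ e => e) + 1 := by
    rw [Finsupp.sum_add_index' (fun _ => rfl) (fun _ _ _ => rfl),
      Finsupp.sum_single_index rfl]
  have h2 : ((m + Finsupp.single i 1).sum fun _ => id)
      = ((m + Finsupp.single i 1).sum fun _ e => e) := rfl
  rw [h2, h1]
  exact Nat.add_le_add_right (le_totalDegree hm) 1

lemma support_anti (i : Fin 2) (p : P2) :
    (anti i p).support ⊆ p.support.image (· + Finsupp.single i 1) := by
  classical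
  refine (MvPolynomial.support_sum).trans ?_
  intro m hm
  simp only [Finset.mem_biUnion] at hm
  obtain ⟨a, ha, hma⟩ := hm
  have := support_monomial_subset hma
  simp only [Finset.mem_singleton] at this
  subst this
  exact Finset.mem_image.2 ⟨a, ha, rfl⟩

lemma coeff_pderiv (i : Fin 2) (f : P2) (m : Fin 2 →₀ ℕ) :
    coeff m (pderiv i f) = coeff (m + Finsupp.single i 1) f * ((m i : ℝ) + 1) := by
  induction f using MvPolynomial.induction_on' with
  | add p q hp hq => simp [hp, hq, add_mul]
  | monomial s a =>
    rw [pderiv_monomial, coeff_monomial, coeff_monomial]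
    by_cases hs : s = m + Finsupp.single i 1
    · subst hs
      rw [if_pos rfl]
      have h2 : m + Finsupp.single i 1 - Finsupp.single i 1 = m := add_tsub_cancel_right _ _
      rw [if_pos h2]
      push_cast
      simp [mul_comm]
    · rw [if_neg hs, zero_mul]
      by_cases h2 : s - Finsupp.single i 1 = m
      · have hsi : s i = 0 := by
          by_contra hne
          apply hs
          rw [← h2, tsub_add_cancel_of_le]
          exact Finsupp.single_le_iff.2 (Nat.one_le_iff_ne_zero.2 hne)
        rw [if_pos h2, hsi]
        simp
      · rw [if_neg h2]

lemma pderiv_zero_of_support {i : Fin 2} {f : P2} (h : ∀ m ∈ f.support, m i = 0) :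
    pderiv i f = 0 := by
  conv_lhs => rw [f.as_sum, map_sum]
  refine Finset.sum_eq_zero fun m hm => ?_
  rw [pderiv_monomial, h m hm]
  simp

lemma pderiv01_comm (f : P2) :
    pderiv (0 : Fin 2) (pderiv (1 : Fin 2) f) = pderiv 1 (pderiv 0 f) := by
  ext m
  rw [coeff_pderiv, coeff_pderiv, coeff_pderiv, coeff_pderiv]
  have h0 : ((m + Finsupp.single (0:Fin 2) 1) : Fin 2 →₀ ℕ) 1 = m 1 := by simp
  have h1 : ((m + Finsupp.single (1:Fin 2) 1) : Fin 2 →₀ ℕ) 0 = m 0 := by simp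
  rw [h0, h1, add_right_comm]
  ring

lemma totalDegree_pderiv_le' {i : Fin 2} {f : P2} {n : ℕ} (h : f.totalDegree ≤ n + 1) :
    (pderiv i f).totalDegree ≤ n := by
  refine Finset.sup_le fun m hm => ?_
  rw [MvPolynomial.mem_support_iff, coeff_pderiv] at hm
  have hc : coeff (m + Finsupp.single i 1) f ≠ 0 := fun hz => hm (by rw [hz, zero_mul])
  have h3 := le_totalDegree (MvPolynomial.mem_support_iff.2 hc)
  have hsum : ((m + Finsupp.single i 1).sum fun _ e => e) = (m.sum fun _ e => e) + 1 := by
    rw [Finsupp.sum_add_index' (fun _ => rfl) (fun _ _ _ => rfl),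
      Finsupp.sum_single_index rfl]
  omega

lemma pderiv_anti_of_ne {i j : Fin 2} (hij : j ≠ i) {p : P2} (h : ∀ m ∈ p.support, m j = 0) :
    pderiv j (anti i p) = 0 := by
  apply pderiv_zero_of_support
  intro m hm
  obtain ⟨a, ha, rfl⟩ := Finset.mem_image.1 (support_anti i p hm)
  simp [h a ha, Finsupp.single_apply, Ne.symm hij]

lemma support_restrict (s : Finset (Fin 2 →₀ ℕ)) (w : P2) :
    (∑ m ∈ s, monomial m (coeff m w)).support ⊆ s := by
  classical
  refine (MvPolynomial.support_sum).trans ?_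
  intro m hm
  simp only [Finset.mem_biUnion] at hm
  obtain ⟨a, ha, hma⟩ := hm
  have := support_monomial_subset hma
  simp only [Finset.mem_singleton] at this
  subst this
  exact ha

lemma totalDegree_restrict (s : Finset (Fin 2 →₀ ℕ)) (w : P2) (hs : s ⊆ w.support) :
    (∑ m ∈ s, monomial m (coeff m w)).totalDegree ≤ w.totalDegree := by
  refine (totalDegree_finset_sum _ _).trans (Finset.sup_le fun m hm => ?_)
  refine (totalDegree_monomial_le _ _).trans ?_
  exact le_totalDegree (hs hm)

/-- Any symmetric polynomial matrix of degree ≤ k in the kernel of `div div`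
is `sym curl` of a polynomial vector field of degree ≤ k+1. -/
theorem stmt_5 (k : ℕ) (hk : 2 ≤ k) (τ : Matrix (Fin 2) (Fin 2) P2)
    (hsym : τᵀ = τ) (hdeg : ∀ i j, (τ i j).totalDegree ≤ k)
    (h : pdivDiv τ = 0) :
    ∃ v : Fin 2 → P2, (∀ i, (v i).totalDegree ≤ k + 1) ∧ τ = psymCurl v := by
  classical
  set A := anti 1 (τ 0 0) with hA_def
  set B := anti 0 (τ 1 1) with hB_def
  set w : P2 := C 2 * τ 0 1 + pderiv 1 B + pderiv 0 A with hw_def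
  have h10 : τ 1 0 = τ 0 1 := by
    have h' := congrFun (congrFun hsym 1) 0
    simpa [Matrix.transpose_apply] using h'.symm
  have hA : pderiv 1 A = τ 0 0 := pderiv_anti _ _
  have hB : pderiv 0 B = τ 1 1 := pderiv_anti _ _
  have hC2 : (C 2 : P2) = 2 := map_ofNat C 2
  have hdd : pderiv 0 (pderiv 1 w) = 0 := by
    have hexp : pderiv (0:Fin 2) (pderiv (0:Fin 2) (τ 0 0))
        + pderiv (0:Fin 2) (pderiv 1 (τ 0 1))
        + (pderiv 1 (pderiv (0:Fin 2) (τ 0 1)) + pderiv 1 (pderiv 1 (τ 1 1))) = 0 := by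
      simpa [pdivDiv, Fin.sum_univ_two, h10] using h
    rw [hw_def, map_add, map_add, map_add, map_add, pderiv_C_mul, pderiv_C_mul]
    have e1 : pderiv (0:Fin 2) (pderiv 1 (pderiv 1 B)) = pderiv 1 (pderiv 1 (τ 1 1)) := by
      rw [pderiv01_comm (pderiv 1 B), pderiv01_comm B, hB]
    have e2 : pderiv (0:Fin 2) (pderiv 1 (pderiv 0 A)) = pderiv 0 (pderiv 0 (τ 0 0)) := by
      rw [← pderiv01_comm A, hA]
    rw [e1, e2, hC2]
    have e3 : pderiv 1 (pderiv (0:Fin 2) (τ 0 1)) = pderiv (0:Fin 2) (pderiv 1 (τ 0 1)) :=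
      (pderiv01_comm _).symm
    rw [e3] at hexp
    linear_combination hexp
  have key : ∀ m : Fin 2 →₀ ℕ, m 0 ≠ 0 → m 1 ≠ 0 → coeff m w = 0 := by
    intro m h0 h1
    set m' : Fin 2 →₀ ℕ := m - Finsupp.single 0 1 - Finsupp.single 1 1 with hm'_def
    have hm : m' + Finsupp.single 0 1 + Finsupp.single 1 1 = m := by
      ext j
      fin_cases j <;>
        simp only [hm'_def, Finsupp.add_apply, Finsupp.tsub_apply, Finsupp.single_apply] <;>
        simp <;> omega
    have hc := congrArg (coeff m') hdd
    rw [coeff_pderiv, coeff_pderiv, coeff_zero, hm] at hc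
    have hne1 : (((m' + Finsupp.single (0:Fin 2) 1) : Fin 2 →₀ ℕ) 1 : ℝ) + 1 ≠ 0 := by
      positivity
    have hne0 : ((m' 0 : ℝ) + 1) ≠ 0 := by positivity
    rcases mul_eq_zero.1 hc with hc2 | hc2
    · rcases mul_eq_zero.1 hc2 with hc3 | hc3
      · exact hc3
      · exact absurd hc3 hne1
    · exact absurd hc2 hne0
  set p : P2 := ∑ m ∈ w.support.filter (fun m => m 1 = 0), monomial m (coeff m w) with hp_def
  set q : P2 := ∑ m ∈ w.support.filter (fun m => ¬ m 1 = 0), monomial m (coeff m w) with hq_def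
  have hpq : p + q = C 2 * τ 0 1 + pderiv 1 B + pderiv 0 A := by
    rw [hp_def, hq_def, Finset.sum_filter_add_sum_filter_not, ← hw_def,
      support_sum_monomial_coeff]
  have hpsupp : ∀ m ∈ p.support, m 1 = 0 := by
    intro m hm
    have := support_restrict _ _ hm
    exact (Finset.mem_filter.1 this).2
  have hqsupp : ∀ m ∈ q.support, m 0 = 0 := by
    intro m hm
    have h2 := support_restrict _ _ hm
    have h3 := (Finset.mem_filter.1 h2).2
    have h4 := MvPolynomial.mem_support_iff.1 ((Finset.mem_filter.1 h2).1)
    by_contra h5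
    exact h4 (key m h5 h3)
  have hpd : pderiv 0 (anti 0 p) = p := pderiv_anti _ _
  have hqd : pderiv 1 (anti 1 q) = q := pderiv_anti _ _
  have hp1 : pderiv 1 (anti 0 p) = 0 := pderiv_anti_of_ne (by decide) hpsupp
  have hq0 : pderiv 0 (anti 1 q) = 0 := pderiv_anti_of_ne (by decide) hqsupp
  refine ⟨![A - anti 0 p, -B + anti 1 q], ?_, ?_⟩
  · -- degree bounds
    have hdegA : A.totalDegree ≤ k + 1 :=
      (totalDegree_anti _ _).trans (Nat.add_le_add_right (hdeg 0 0) 1)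
    have hdegB : B.totalDegree ≤ k + 1 :=
      (totalDegree_anti _ _).trans (Nat.add_le_add_right (hdeg 1 1) 1)
    have hdegw : w.totalDegree ≤ k := by
      rw [hw_def]
      refine (totalDegree_add _ _).trans (max_le ((totalDegree_add _ _).trans (max_le ?_ ?_)) ?_)
      · refine (totalDegree_mul _ _).trans ?_
        rw [totalDegree_C, Nat.zero_add]
        exact hdeg 0 1
      · exact totalDegree_pderiv_le' hdegB
      · exact totalDegree_pderiv_le' hdegA
    have hdegp : p.totalDegree ≤ k :=
      (totalDegree_restrict _ _ (Finset.filter_subset _ _)).trans hdegw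
    have hdegq : q.totalDegree ≤ k :=
      (totalDegree_restrict _ _ (Finset.filter_subset _ _)).trans hdegw
    intro i
    fin_cases i
    · refine (totalDegree_sub _ _).trans (max_le hdegA ?_)
      exact (totalDegree_anti _ _).trans (Nat.add_le_add_right hdegp 1)
    · refine (totalDegree_add _ _).trans (max_le ?_ ?_)
      · rw [totalDegree_neg]; exact hdegB
      · exact (totalDegree_anti _ _).trans (Nat.add_le_add_right hdegq 1)
  · -- the matrix identity
    have half : ∀ x : P2, (1 / 2 : ℝ) • (x + x) = x := by
      intro x
      rw [← two_smul ℝ x, smul_smul]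
      norm_num
    have hv0 : (![A - anti 0 p, -B + anti 1 q] : Fin 2 → P2) 0 = A - anti 0 p := rfl
    have hv1 : (![A - anti 0 p, -B + anti 1 q] : Fin 2 → P2) 1 = -B + anti 1 q := rfl
    have d10 : pderiv 1 (A - anti 0 p) = τ 0 0 := by
      rw [map_sub, hA, hp1, sub_zero]
    have d00 : pderiv 0 (A - anti 0 p) = pderiv 0 A - p := by
      rw [map_sub, hpd]
    have d01 : pderiv 0 (-B + anti 1 q) = -(τ 1 1) := by
      rw [map_add, map_neg, hB, hq0, add_zero]
    have d11 : pderiv 1 (-B + anti 1 q) = -(pderiv 1 B) + q := by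
      rw [map_add, map_neg, hqd]
    funext i j
    fin_cases i <;> fin_cases j <;>
      simp only [psymCurl, pcurl, Matrix.smul_apply, Matrix.add_apply, Matrix.transpose_apply,
        Matrix.of_apply, Fin.isValue, Fin.zero_eta, Fin.mk_one, Matrix.cons_val_zero,
        Matrix.cons_val_one, Matrix.head_cons, one_ne_zero, if_true, if_false, reduceIte]
    · rw [d10, half]
    · rw [d00, d11,
        show -(pderiv 0 A - p) + (-(pderiv 1 B) + q) = C 2 * τ 0 1 from by linear_combination hpq,
        hC2, two_mul, half]
    · rw [d00, d11,
        show -(pderiv 1 B) + q + -(pderiv 0 A - p) = C 2 * τ 0 1 from by linear_combination hpq,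
        hC2, two_mul, half, h10]
    · rw [d01, neg_neg, half]
end

section
/- Let k ≥ 2 be an integer. If τ is a symmetric polynomial matrix whose entries have total degree at most k−1 and the polynomial xᵀ τ x = Σ_{i,j} Xᵢ·τ_{ij}·Xⱼ is zero, then there exists a polynomial vector field v = (v₁, v₂) with components of total degree at most k−2 such that τ = sym(x^⊥ ⊗ v). -/
open MvPolynomial Matrix

private lemma prime_X0' : Prime (X 0 : P2) := by
  rw [← MulEquiv.prime_iff (MvPolynomial.finSuccEquiv ℝ 1).toRingEquiv.toMulEquiv]
  have : Prime (Polynomial.X : Polynomial (MvPolynomial (Fin 1) ℝ)) := Polynomial.prime_X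
  simpa [MvPolynomial.finSuccEquiv_X_zero] using this

private lemma prime_Xi' (i : Fin 2) : Prime (X i : P2) := by
  fin_cases i
  · exact prime_X0'
  · show Prime (X 1 : P2)
    rw [← MulEquiv.prime_iff (MvPolynomial.renameEquiv ℝ (Equiv.swap (0:Fin 2) 1)).toRingEquiv.toMulEquiv]
    simpa [renameEquiv, Equiv.swap_apply_right] using prime_X0'

private lemma deg_helper' {s : Fin 2} {p : P2} {n : ℕ} (h : (X s * p).totalDegree ≤ n + 1) :
    p.totalDegree ≤ n := by
  refine Finset.sup_le fun m hm => ?_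
  have hmem : Finsupp.single s 1 + m ∈ (X s * p).support := by
    rw [mem_support_iff, coeff_X_mul]
    exact mem_support_iff.mp hm
  have := le_totalDegree hmem
  have h2 : (Finsupp.single s 1 + m).sum (fun _ e => e) = m.sum (fun _ e => e) + 1 := by
    rw [Finsupp.sum_add_index' (fun _ => rfl) (fun _ _ _ => rfl)]
    simp [add_comm]
  omega

/-- If a symmetric polynomial matrix of degree ≤ k−1 satisfies `xᵀ τ x = 0`,
then `τ = sym(x^⊥ ⊗ v)` for a polynomial vector field `v` of degree ≤ k−2. -/
theorem stmt_14 (k : ℕ) (hk : 2 ≤ k) (τ : Matrix (Fin 2) (Fin 2) P2)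
    (hsym : τᵀ = τ) (hdeg : ∀ i j, (τ i j).totalDegree ≤ k - 1)
    (h : ∑ i : Fin 2, ∑ j : Fin 2, X i * τ i j * X j = 0) :
    ∃ v : Fin 2 → P2, (∀ i, (v i).totalDegree ≤ k - 2) ∧ τ = symTen v := by
  have hsym01 : τ 1 0 = τ 0 1 := congrFun (congrFun hsym 0) 1
  simp only [Fin.sum_univ_two] at h
  rw [hsym01] at h
  -- X 1 divides τ 0 0
  have d1 : (X 1 : P2) ∣ X 0 * (τ 0 0 * X 0) := by
    refine ⟨-(X 0 * τ 0 1 + τ 0 1 * X 0 + X 1 * τ 1 1), ?_⟩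
    linear_combination h
  have hX10 : ¬ (X 1 : P2) ∣ X 0 := by simp
  have h00 : (X 1 : P2) ∣ τ 0 0 := by
    rcases (prime_Xi' 1).dvd_mul.mp d1 with h' | h'
    · exact absurd h' hX10
    rcases (prime_Xi' 1).dvd_mul.mp h' with h'' | h''
    · exact h''
    · exact absurd h'' hX10
  have d2 : (X 0 : P2) ∣ X 1 * (τ 1 1 * X 1) := by
    refine ⟨-(τ 0 0 * X 0 + τ 0 1 * X 1 + X 1 * τ 0 1), ?_⟩
    linear_combination h
  have hX01 : ¬ (X 0 : P2) ∣ X 1 := by simp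
  have h11 : (X 0 : P2) ∣ τ 1 1 := by
    rcases (prime_Xi' 0).dvd_mul.mp d2 with h' | h'
    · exact absurd h' hX01
    rcases (prime_Xi' 0).dvd_mul.mp h' with h'' | h''
    · exact h''
    · exact absurd h'' hX01
  obtain ⟨v0, hv0⟩ := h00
  obtain ⟨w, hw⟩ := h11
  have key : (X 0 : P2) * X 1 * (X 0 * v0 + 2 * τ 0 1 + X 1 * w) = 0 := by
    linear_combination h - X 0 * X 0 * hv0 - X 1 * X 1 * hw
  have hxx : (X 0 * X 1 : P2) ≠ 0 :=
    mul_ne_zero (MvPolynomial.X_ne_zero 0) (MvPolynomial.X_ne_zero 1)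
  have hfac : (X 0 : P2) * v0 + 2 * τ 0 1 + X 1 * w = 0 :=
    (mul_eq_zero.mp key).resolve_left hxx
  set c : P2 := C (1/2 : ℝ) with hcdef
  have hc : c * 2 = 1 := by
    rw [hcdef, show (2 : P2) = C (2:ℝ) from (map_ofNat C 2).symm, ← MvPolynomial.C_mul]
    norm_num
  refine ⟨![v0, -w], ?_, ?_⟩
  · have hk1 : k - 1 = (k - 2) + 1 := by omega
    intro i
    fin_cases i
    · show v0.totalDegree ≤ k - 2
      refine deg_helper' (s := 1) ?_
      rw [← hv0, ← hk1]
      exact hdeg 0 0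
    · show (-w).totalDegree ≤ k - 2
      rw [totalDegree_neg]
      refine deg_helper' (s := 0) ?_
      rw [← hw, ← hk1]
      exact hdeg 1 1
  · have e00 : τ 0 0 = symTen ![v0, -w] 0 0 := by
      simp only [symTen, xPerp, Matrix.of_apply, Matrix.cons_val_zero, Matrix.cons_val_one,
        Matrix.head_cons, MvPolynomial.smul_eq_C_mul, ← hcdef]
      linear_combination hv0 - (X 1 : P2) * v0 * hc
    have e01 : τ 0 1 = symTen ![v0, -w] 0 1 := by
      simp only [symTen, xPerp, Matrix.of_apply, Matrix.cons_val_zero, Matrix.cons_val_one,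
        Matrix.head_cons, MvPolynomial.smul_eq_C_mul, ← hcdef]
      linear_combination c * hfac - τ 0 1 * hc
    have e10 : τ 1 0 = symTen ![v0, -w] 1 0 := by
      simp only [symTen, xPerp, Matrix.of_apply, Matrix.cons_val_zero, Matrix.cons_val_one,
        Matrix.head_cons, MvPolynomial.smul_eq_C_mul, ← hcdef]
      linear_combination hsym01 + c * hfac - τ 0 1 * hc
    have e11 : τ 1 1 = symTen ![v0, -w] 1 1 := by
      simp only [symTen, xPerp, Matrix.of_apply, Matrix.cons_val_zero, Matrix.cons_val_one,
        Matrix.head_cons, MvPolynomial.smul_eq_C_mul, ← hcdef]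
      linear_combination hw - (X 0 : P2) * w * hc
    refine Matrix.ext fun i j => ?_
    fin_cases i <;> fin_cases j
    · exact e00
    · exact e01
    · exact e10
    · exact e11
end

section
/- Let k ≥ 2 be an integer. For every polynomial vector field w = (w₁, w₂) with components of total degree at most k−2 there exists a unique polynomial vector field v = (v₁, v₂) with components of total degree at most k−2 such that rot(sym(x^⊥ ⊗ v)) = w; that is, rot is a bijection from {sym(x^⊥ ⊗ v) : v with components of total degree ≤ k−2} onto the polynomial vector fields with components of total degree at most k−2. -/
open MvPolynomial Matrix

noncomputable def euler (p : P2) : P2 := X 0 * pderiv 0 p + X 1 * pderiv 1 p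

lemma pderiv_comm' (i j : Fin 2) (p : P2) :
    pderiv i (pderiv j p) = pderiv j (pderiv i p) := by
  rcases eq_or_ne i j with rfl | hij
  · rfl
  induction p using MvPolynomial.induction_on' with
  | monomial s a =>
    simp only [pderiv_monomial]
    rw [Finsupp.tsub_apply, Finsupp.tsub_apply, Finsupp.single_eq_of_ne' hij,
      Finsupp.single_eq_of_ne' hij.symm, tsub_zero, tsub_zero, tsub_tsub, tsub_tsub,
      add_comm (Finsupp.single j 1)]
    ring_nf
  | add p q hp hq => simp [hp, hq]

lemma coeff_X_mul_pderiv (i : Fin 2) (p : P2) (m : Fin 2 →₀ ℕ) :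
    coeff m (X i * pderiv i p) = (m i : ℝ) * coeff m p := by
  induction p using MvPolynomial.induction_on' with
  | monomial s a =>
    rw [pderiv_monomial]
    rw [show (X i : P2) = monomial (Finsupp.single i 1) 1 from rfl, monomial_mul, one_mul]
    rcases Nat.eq_zero_or_pos (s i) with h0 | h0
    · simp only [h0, Nat.cast_zero, mul_zero, map_zero, coeff_zero, coeff_monomial]
      split_ifs with h
      · subst h; rw [h0]; norm_num
      · ring
    · have hs : Finsupp.single i 1 + (s - Finsupp.single i 1) = s := by
        ext j
        rcases eq_or_ne j i with rfl | hj
        · simp [Finsupp.single_eq_same]; omega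
        · simp [Finsupp.single_eq_of_ne' (Ne.symm hj)]
      rw [hs, coeff_monomial, coeff_monomial]
      split_ifs with h
      · subst h; ring
      · ring
  | add p q hp hq => simp [mul_add, hp, hq]

lemma euler_inj {p : P2} (h : (3:P2) * p + euler p = 0) : p = 0 := by
  ext m
  rw [show ((3:P2)) = C (3:ℝ) from (map_ofNat C 3).symm] at h
  have hm := congrArg (coeff m) h
  simp only [euler, coeff_add, coeff_C_mul, coeff_X_mul_pderiv, coeff_zero] at hm
  have hpos : (3 : ℝ) + (m 0 : ℝ) + (m 1 : ℝ) ≠ 0 := by positivity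
  have : ((3:ℝ) + m 0 + m 1) * coeff m p = 0 := by linarith
  rcases mul_eq_zero.1 this with h' | h'
  · exact absurd h' hpos
  · simpa using h'

lemma deg_X_mul_pderiv (j i : Fin 2) (p : P2) :
    (X j * pderiv i p).totalDegree ≤ p.totalDegree := by
  have hrw : X j * pderiv i p
      = ∑ m ∈ p.support, X j * pderiv i (monomial m (coeff m p)) := by
    rw [← Finset.mul_sum, ← map_sum]
    congr 1
    exact congrArg _ (p.as_sum)
  rw [hrw]
  refine (totalDegree_finset_sum _ _).trans (Finset.sup_le fun m hm => ?_)
  rcases Nat.eq_zero_or_pos (m i) with h0 | h0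
  · simp [pderiv_monomial, h0]
  · rw [pderiv_monomial,
      show (X j : P2) = monomial (Finsupp.single j 1) 1 from rfl, monomial_mul, one_mul]
    refine (totalDegree_monomial_le _ _).trans ?_
    have hsum : (Finsupp.single j 1 + (m - Finsupp.single i 1)).sum (fun _ e => e)
        = m.sum (fun _ e => e) := by
      rw [Finsupp.sum_add_index (by simp) (by simp)]
      have hm' : m = (m - Finsupp.single i 1) + Finsupp.single i 1 := by
        ext l
        rcases eq_or_ne l i with rfl | hl
        · simp [Finsupp.single_eq_same]; omega
        · simp [Finsupp.single_eq_of_ne' (Ne.symm hl)]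
      conv_rhs => rw [hm', Finsupp.sum_add_index (by simp) (by simp)]
      simp [Finsupp.sum_single_index, add_comm]
    exact hsum.trans_le (le_totalDegree hm)




lemma master (v : Fin 2 → P2) (i : Fin 2) :
    prot (symTen v) i = (-(1/2) : ℝ) • ((3:P2) * v i + euler (v i)
      + (pderiv 1 (v 0) - pderiv 0 (v 1)) * xPerp i) := by
  fin_cases i <;>
  · simp only [prot, symTen, xPerp, euler, Matrix.of_apply,
      Matrix.cons_val_zero, Matrix.cons_val_one, Matrix.head_cons, Derivation.map_smul, LinearMap.map_smul,
      Fin.zero_eta, Fin.mk_one, Fin.isValue]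
    rw [← smul_sub, neg_smul, ← smul_neg]
    congr 1
    simp only [map_add, pderiv_mul, pderiv_X_self, pderiv_X_of_ne (by decide : (1:Fin 2) ≠ 0),
      pderiv_X_of_ne (by decide : (0:Fin 2) ≠ 1), map_neg, map_sub, Fin.isValue]
    ring

noncomputable def Tlin : (Fin 2 → P2) →ₗ[ℝ] (Fin 2 → P2) where
  toFun v := prot (symTen v)
  map_add' u v := by
    funext i
    simp only [master, Pi.add_apply, map_add, euler]
    rw [← smul_add]
    congr 1
    ring
  map_smul' a v := by
    funext i
    simp only [master, Pi.smul_apply, euler, smul_eq_C_mul, pderiv_C_mul, RingHom.id_apply]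
    ring

lemma C3eq : ((3:P2)) = C (3:ℝ) := (map_ofNat C 3).symm

lemma pd3 (i : Fin 2) : pderiv i (3:P2) = 0 := by rw [C3eq]; exact pderiv_C

lemma key_inj (v : Fin 2 → P2) (hv : prot (symTen v) = 0) : v = 0 := by
  set ω : P2 := pderiv 1 (v 0) - pderiv 0 (v 1) with hω
  have A : ∀ i, (3:P2) * v i + euler (v i) + ω * xPerp i = 0 := by
    intro i
    have h := congrFun hv i
    rw [master] at h
    have h2 : (3:P2) * v i + euler (v i) + ω * xPerp i
        = (-2:ℝ) • ((-(1/2):ℝ) • ((3:P2) * v i + euler (v i) + ω * xPerp i)) := by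
      rw [smul_smul]; norm_num
    rw [h2, h]
    simp
  have A0 := A 0
  have A1 := A 1
  simp only [xPerp, Matrix.cons_val_zero, Matrix.cons_val_one, Matrix.head_cons] at A0 A1
  have d0 := congrArg (pderiv 0) hω
  have d1 := congrArg (pderiv 1) hω
  simp only [map_sub] at d0 d1
  have e0 := congrArg (pderiv 1) A0
  have e1 := congrArg (pderiv 0) A1
  simp only [map_add, pderiv_mul, euler, map_zero, pderiv_C_mul, mul_zero, zero_mul,
    mul_one, one_mul, add_zero, zero_add, mul_neg, neg_mul,
    pderiv_X_self, pderiv_X_of_ne (by decide : (1:Fin 2) ≠ 0),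
    pderiv_X_of_ne (by decide : (0:Fin 2) ≠ 1), map_neg, pd3] at e0 e1
  rw [pderiv_comm' 1 0 (v 0)] at e0
  rw [pderiv_comm' 1 0 (v 1)] at d1
  have h2 : (3:P2) * ω + euler ω = 0 := by
    have h6 : (2:P2) * ((3:P2) * ω + euler ω) = 0 := by
      simp only [euler]
      linear_combination e0 - e1 + 4 * hω + X 0 * d0 + X 1 * d1
    rcases mul_eq_zero.1 h6 with h' | h'
    · exact absurd h' (by norm_num)
    · exact h'
  have hω0 : ω = 0 := euler_inj h2
  have hv0 : ∀ i, v i = 0 := by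
    intro i
    refine euler_inj ?_
    have := A i
    rw [hω0, zero_mul, add_zero] at this
    exact this
  funext i
  exact hv0 i

lemma deg_T {n : ℕ} (v : Fin 2 → P2) (h : ∀ i, (v i).totalDegree ≤ n) (i : Fin 2) :
    (prot (symTen v) i).totalDegree ≤ n := by
  rw [master]
  refine (totalDegree_smul_le _ _).trans ?_
  refine (totalDegree_add _ _).trans (max_le ((totalDegree_add _ _).trans (max_le ?_ ?_)) ?_)
  · refine (totalDegree_mul _ _).trans ?_
    rw [C3eq, totalDegree_C, zero_add]
    exact h i
  · simp only [euler]
    exact (totalDegree_add _ _).trans (max_le ((deg_X_mul_pderiv _ _ _).trans (h i))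
      ((deg_X_mul_pderiv _ _ _).trans (h i)))
  · rw [sub_mul]
    refine (totalDegree_sub _ _).trans (max_le ?_ ?_)
    · fin_cases i <;>
      · simp only [xPerp, Matrix.cons_val_zero, Matrix.cons_val_one, Matrix.head_cons,
          Fin.zero_eta, Fin.mk_one, Fin.isValue]
        first
        | (rw [mul_neg, totalDegree_neg, mul_comm]; exact (deg_X_mul_pderiv _ _ _).trans (h 0))
        | (rw [mul_comm]; exact (deg_X_mul_pderiv _ _ _).trans (h 0))
    · fin_cases i <;>
      · simp only [xPerp, Matrix.cons_val_zero, Matrix.cons_val_one, Matrix.head_cons,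
          Fin.zero_eta, Fin.mk_one, Fin.isValue]
        first
        | (rw [mul_neg, totalDegree_neg, mul_comm]; exact (deg_X_mul_pderiv _ _ _).trans (h 1))
        | (rw [mul_comm]; exact (deg_X_mul_pderiv _ _ _).trans (h 1))

noncomputable def Wsub (n : ℕ) : Submodule ℝ (Fin 2 → P2) :=
  Submodule.pi Set.univ fun _ => restrictTotalDegree (Fin 2) ℝ n

instance (n : ℕ) : FiniteDimensional ℝ (Wsub n) :=
  Module.Finite.iff_fg.2 (Submodule.fg_pi fun _ => Module.Finite.iff_fg.1 inferInstance)

lemma mem_Wsub {n : ℕ} {v : Fin 2 → P2} :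
    v ∈ Wsub n ↔ ∀ i, (v i).totalDegree ≤ n := by
  simp [Wsub, Submodule.mem_pi, mem_restrictTotalDegree]

lemma Tmaps {n : ℕ} : ∀ v ∈ Wsub n, Tlin v ∈ Wsub n := by
  intro v hv
  rw [mem_Wsub] at hv ⊢
  exact deg_T v hv

lemma Tsurj (n : ℕ) (w : Fin 2 → P2) (hw : w ∈ Wsub n) :
    ∃ v ∈ Wsub n, prot (symTen v) = w := by
  have hinj : Function.Injective (Tlin.restrict (p := Wsub n) (q := Wsub n) Tmaps) := by
    rw [← LinearMap.ker_eq_bot, LinearMap.ker_eq_bot']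
    intro x hx
    have : Tlin (x : Fin 2 → P2) = 0 := by
      have := congrArg (Subtype.val) hx
      simpa [LinearMap.restrict_apply] using this
    have hx0 : (x : Fin 2 → P2) = 0 := key_inj _ this
    exact Subtype.ext hx0
  have hsurj := (LinearMap.injective_iff_surjective).1 hinj
  obtain ⟨vW, hvW⟩ := hsurj ⟨w, hw⟩
  refine ⟨vW, vW.2, ?_⟩
  have := congrArg Subtype.val hvW
  exact (by simpa [LinearMap.restrict_apply] using this : Tlin vW = w)

/-- `rot` is a bijection from `{sym(x^⊥ ⊗ v) : deg v ≤ k−2}` onto polynomial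
vector fields of degree ≤ k−2. -/
theorem stmt_17 (k : ℕ) (hk : 2 ≤ k) (w : Fin 2 → P2)
    (hdeg : ∀ i, (w i).totalDegree ≤ k - 2) :
    ∃! v : Fin 2 → P2,
      (∀ i, (v i).totalDegree ≤ k - 2) ∧ prot (symTen v) = w := by
  obtain ⟨v, hv, hveq⟩ := Tsurj (k-2) w (mem_Wsub.2 hdeg)
  refine ⟨v, ⟨mem_Wsub.1 hv, hveq⟩, ?_⟩
  rintro v' ⟨hv', hv'eq⟩
  have hsub : prot (symTen (v' - v)) = 0 := by
    calc prot (symTen (v' - v)) = Tlin (v' - v) := rfl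
      _ = Tlin v' - Tlin v := map_sub _ _ _
      _ = w - w := by rw [show Tlin v' = w from hv'eq, show Tlin v = w from hveq]
      _ = 0 := sub_self w
  exact sub_eq_zero.1 (key_inj _ hsub)
end
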